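/- Let Ω > 0, let Γ = [[0, −1/(iΩ)], [1/(iΩ), 0]], let δ ∈ ℝ, let X ≠ 0 be real, and let γ ∈ ℂ. Define Y_g = γ·[[sin δ cos δ, −cos²δ], [sin²δ, −sin δ cos δ]] + [[0, 1/X], [−1/X, 0]]. Then the Hermitian part K_g = (1/2)(Y_gΓ + (Y_gΓ)*) equals (−Im(γ)/Ω)·[[cos²δ, sin δ cos δ], [sin δ cos δ, sin²δ]]. In particular, the skew-symmetric constant part [[0, 1/X], [−1/X, 0]] contributes nothing to K_g. -/
import Mathlib


open Matrix Complex

/-- For the classical generator FRF `Y_g`, the Hermitian part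
`K_g = (1/2)(Y_gΓ + (Y_gΓ)*)` equals
`(−Im γ / Ω) · [[cos²δ, sin δ cos δ], [sin δ cos δ, sin²δ]]`. -/
theorem stmt2 (Ω : ℝ) (hΩ : 0 < Ω) (δ X : ℝ) (hX : X ≠ 0) (γ : ℂ) :
    let Γ : Matrix (Fin 2) (Fin 2) ℂ :=
      !![0, -(1 / (Complex.I * Ω)); 1 / (Complex.I * Ω), 0]
    let Yg : Matrix (Fin 2) (Fin 2) ℂ :=
      γ • !![(Real.sin δ : ℂ) * (Real.cos δ : ℂ), -((Real.cos δ : ℂ) ^ 2);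
             (Real.sin δ : ℂ) ^ 2, -((Real.sin δ : ℂ) * (Real.cos δ : ℂ))] +
        !![0, 1 / (X : ℂ); -(1 / (X : ℂ)), 0]
    (1 / 2 : ℂ) • (Yg * Γ + (Yg * Γ)ᴴ) =
      ((-γ.im / Ω : ℝ) : ℂ) •
        !![(Real.cos δ : ℂ) ^ 2, (Real.sin δ : ℂ) * (Real.cos δ : ℂ);
           (Real.sin δ : ℂ) * (Real.cos δ : ℂ), (Real.sin δ : ℂ) ^ 2] := by
  intro Γ Yg
  have hΩ' : (Ω : ℂ) ≠ 0 := Complex.ofReal_ne_zero.mpr hΩ.ne'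
  have hX' : (X : ℂ) ≠ 0 := Complex.ofReal_ne_zero.mpr hX
  ext i j
  fin_cases i <;> fin_cases j <;>
    simp [Γ, Yg, Matrix.mul_apply, Fin.sum_univ_two, Matrix.smul_apply,
      Complex.ext_iff, Complex.div_re, Complex.div_im, Complex.normSq,
      Complex.conj_ofReal, -Complex.ofReal_cos, -Complex.ofReal_sin, ← Complex.ofReal_pow, ← Complex.ofReal_mul]
  all_goals (field_simp; ring)
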